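/- For each x ≥ 0, the first central moment of the Dunkl-Appell Gamma-type operator satisfies Ω_n^1(x) := D_n*((t−x); x) = (μ/n)·(e_μ(−nx)/e_μ(nx))·(A(1)−A(−1))/A(1) + (1/n)·(A'(1)/A(1) + λ + 1); in particular Ω_n^1(x) → 0 as n → ∞, uniformly on compact subsets of [0, ∞). -/

import Mathlib

open scoped BigOperators
open MeasureTheory Filter

/-- Parity indicator: 0 for even, 1 for odd. -/
def theta (j : ℕ) : ℝ := if j % 2 = 1 then 1 else 0

/-- Dunkl coefficients via the recursion. -/
noncomputable def gamRec (μ : ℝ) : ℕ → ℝ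
  | 0 => 1
  | k + 1 => ((k : ℝ) + 1 + 2 * μ * theta (k + 1)) * gamRec μ k

/-- Dunkl exponential. -/
noncomputable def emu (μ : ℝ) (x : ℝ) : ℝ := ∑' k : ℕ, x ^ k / gamRec μ k

/-- Dunkl-Appell polynomials. -/
noncomputable def pk (μ : ℝ) (a : ℕ → ℝ) (k : ℕ) (x : ℝ) : ℝ :=
  ∑ j ∈ Finset.range (k + 1),
    (gamRec μ k / (gamRec μ j * gamRec μ (k - j))) * a (k - j) * x ^ j

/-- The analytic function A. -/
noncomputable def Afun (μ : ℝ) (a : ℕ → ℝ) (t : ℝ) : ℝ := ∑' r : ℕ, a r * t ^ r / gamRec μ r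

/-- Dunkl-Appell Gamma-type (Szász–Durrmeyer) operator. -/
noncomputable def Dop (μ lam : ℝ) (a : ℕ → ℝ) (n : ℕ) (f : ℝ → ℝ) (x : ℝ) : ℝ :=
  (1 / (emu μ (n * x) * Afun μ a 1)) *
    ∑' k : ℕ, (pk μ a k (n * x) / gamRec μ k) *
      ((n : ℝ) ^ ((k : ℝ) + 2 * μ * theta k + lam + 1) /
        Real.Gamma ((k : ℝ) + 2 * μ * theta k + lam + 1)) *
      ∫ t in Set.Ioi (0 : ℝ), Real.exp (-(n : ℝ) * t) * t ^ ((k : ℝ) + 2 * μ * theta k + lam) * f t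

/-- Analyticity (radius of convergence > 1) hypothesis for A. -/
def AnalyticHyp (μ : ℝ) (a : ℕ → ℝ) : Prop :=
  ∃ R > (1 : ℝ), ∀ t : ℝ, |t| < R → Summable (fun r : ℕ => a r * t ^ r / gamRec μ r)

/-- Modulus of continuity on [0,∞). -/
noncomputable def modCont (f : ℝ → ℝ) (δ : ℝ) : ℝ :=
  sSup {d : ℝ | ∃ x y : ℝ, 0 ≤ x ∧ 0 ≤ y ∧ |x - y| ≤ δ ∧ d = |f x - f y|}

/-- sup norm on [0,∞). -/
noncomputable def CBnorm (g : ℝ → ℝ) : ℝ := sSup ((fun x => |g x|) '' Set.Ici 0)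

/-- Dunkl coefficients via the Gamma-function formulas of the paper. -/
noncomputable def gamG (μ : ℝ) (m : ℕ) : ℝ :=
  if m % 2 = 0 then
    2 ^ m * (Nat.factorial (m / 2)) * Real.Gamma ((m / 2 : ℕ) + μ + 1 / 2) / Real.Gamma (μ + 1 / 2)
  else
    2 ^ m * (Nat.factorial ((m - 1) / 2)) * Real.Gamma (((m - 1) / 2 : ℕ) + μ + 3 / 2) / Real.Gamma (μ + 1 / 2)

/-! ### Auxiliary lemmas -/

section Aux

open Set Finset

lemma theta_nonneg (j : ℕ) : 0 ≤ theta j := by unfold theta; split <;> norm_num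

lemma theta_le_one (j : ℕ) : theta j ≤ 1 := by unfold theta; split <;> norm_num

lemma theta_add (j r : ℕ) : theta (j + r) = theta j + theta r - 2 * theta j * theta r := by
  unfold theta
  rcases Nat.even_or_odd j with hj | hj <;> rcases Nat.even_or_odd r with hr | hr <;>
    simp [Nat.even_iff, Nat.odd_iff, Nat.add_mod] at hj hr ⊢ <;> simp [hj, hr] <;> norm_num

lemma theta_eq (j : ℕ) : theta j = (1 - (-1:ℝ) ^ j) / 2 := by
  unfold theta
  rcases Nat.mod_two_eq_zero_or_one j with h | h
  · rw [(Nat.even_iff.mpr h).neg_one_pow]; simp [h]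
  · rw [(Nat.odd_iff.mpr h).neg_one_pow]; simp [h]

lemma gamRec_succ (μ : ℝ) (k : ℕ) :
    gamRec μ (k + 1) = ((k : ℝ) + 1 + 2 * μ * theta (k + 1)) * gamRec μ k := rfl

lemma gamRec_pos (μ : ℝ) (hμ : 0 ≤ μ) (k : ℕ) : 0 < gamRec μ k := by
  induction k with
  | zero => norm_num [gamRec]
  | succ k ih =>
    rw [gamRec_succ]
    have h1 : (0:ℝ) ≤ 2 * μ * theta (k+1) := by
      have := theta_nonneg (k+1); positivity
    have : (0:ℝ) < (k:ℝ) + 1 + 2 * μ * theta (k+1) := by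
      have := Nat.cast_nonneg (α := ℝ) k; linarith
    exact mul_pos this ih

lemma factorial_le_gamRec (μ : ℝ) (hμ : 0 ≤ μ) (k : ℕ) :
    (k.factorial : ℝ) ≤ gamRec μ k := by
  induction k with
  | zero => norm_num [gamRec]
  | succ k ih =>
    rw [gamRec_succ]
    have h1 : (0:ℝ) ≤ 2 * μ * theta (k+1) := by
      have := theta_nonneg (k+1); positivity
    have h2 : ((k:ℝ) + 1) ≤ (k:ℝ) + 1 + 2 * μ * theta (k+1) := by linarith
    calc ((k+1).factorial : ℝ) = ((k:ℝ)+1) * (k.factorial : ℝ) := by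
          push_cast [Nat.factorial_succ]; ring
      _ ≤ ((k:ℝ) + 1 + 2 * μ * theta (k+1)) * gamRec μ k := by
          apply mul_le_mul h2 ih (by positivity) (by linarith [Nat.cast_nonneg (α := ℝ) k])

lemma summable_norm_E (μ : ℝ) (hμ : 0 ≤ μ) (y : ℝ) :
    Summable (fun k : ℕ => ‖y ^ k / gamRec μ k‖) := by
  apply Summable.of_nonneg_of_le (fun k => norm_nonneg _)
    (fun k => ?_) (Real.summable_pow_div_factorial |y|)
  rw [Real.norm_eq_abs, abs_div, abs_pow, abs_of_pos (gamRec_pos μ hμ k)]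
  apply div_le_div_of_nonneg_left ?_ ?_ (factorial_le_gamRec μ hμ k)
  · positivity
  · exact_mod_cast Nat.factorial_pos k

lemma summable_E (μ : ℝ) (hμ : 0 ≤ μ) (y : ℝ) :
    Summable (fun k : ℕ => y ^ k / gamRec μ k) := (summable_norm_E μ hμ y).of_norm

lemma one_le_emu (μ : ℝ) (hμ : 0 ≤ μ) {y : ℝ} (hy : 0 ≤ y) : 1 ≤ emu μ y := by
  have h0 : (y : ℝ) ^ 0 / gamRec μ 0 = 1 := by norm_num [gamRec]
  have := Summable.le_tsum (summable_E μ hμ y) 0 (fun j _ => by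
    have := gamRec_pos μ hμ j; positivity)
  rw [h0] at this
  exact this

lemma emu_pos (μ : ℝ) (hμ : 0 ≤ μ) {y : ℝ} (hy : 0 ≤ y) : 0 < emu μ y :=
  lt_of_lt_of_le one_pos (one_le_emu μ hμ hy)

lemma abs_emu_neg_le (μ : ℝ) (hμ : 0 ≤ μ) {y : ℝ} (hy : 0 ≤ y) :
    |emu μ (-y)| ≤ emu μ y := by
  have h1 : |emu μ (-y)| ≤ ∑' k : ℕ, ‖(-y) ^ k / gamRec μ k‖ :=
    norm_tsum_le_tsum_norm (summable_norm_E μ hμ (-y))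
  refine h1.trans (le_of_eq (tsum_congr fun k => ?_))
  have := gamRec_pos μ hμ k
  rw [Real.norm_eq_abs, abs_div, abs_pow, abs_neg, abs_of_nonneg hy, abs_of_pos this]

lemma coeff_bound (μ : ℝ) (hμ : 0 ≤ μ) (a : ℕ → ℝ) (hA : AnalyticHyp μ a) :
    ∃ t₀ > (1:ℝ), ∃ C ≥ (0:ℝ), ∀ r : ℕ, |a r| / gamRec μ r ≤ C / t₀ ^ r := by
  obtain ⟨R, hR, hsum⟩ := hA
  set t₀ := (1 + R) / 2 with ht₀def
  have ht₀ : 1 < t₀ := by rw [ht₀def]; linarith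
  have ht₀R : |t₀| < R := by rw [abs_of_pos (by linarith)]; rw [ht₀def]; linarith
  have hs := hsum t₀ ht₀R
  have htend : Tendsto (fun r : ℕ => |a r * t₀ ^ r / gamRec μ r|) atTop (nhds 0) := by
    simpa using (hs.tendsto_atTop_zero).abs
  obtain ⟨C, hC⟩ := htend.bddAbove_range
  refine ⟨t₀, ht₀, C, le_trans (abs_nonneg _) (hC ⟨0, rfl⟩), fun r => ?_⟩
  have hCr : |a r * t₀ ^ r / gamRec μ r| ≤ C := hC ⟨r, rfl⟩
  have hg := gamRec_pos μ hμ r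
  have ht₀p : (0:ℝ) < t₀ ^ r := by positivity
  rw [abs_div, abs_mul, abs_of_pos hg, abs_of_pos ht₀p] at hCr
  rw [div_le_iff₀ hg] at hCr
  rw [div_le_div_iff₀ hg ht₀p]
  nlinarith

lemma summable_norm_wA (μ : ℝ) (hμ : 0 ≤ μ) (a : ℕ → ℝ) {t₀ C : ℝ} (ht₀ : 1 < t₀) (hC : 0 ≤ C)
    (hb : ∀ r : ℕ, |a r| / gamRec μ r ≤ C / t₀ ^ r) (w : ℕ → ℝ) {D : ℝ} (hD : 0 ≤ D)
    (hw : ∀ r, |w r| ≤ D * ((r : ℝ) + 1)) :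
    Summable (fun r : ℕ => ‖w r * (a r / gamRec μ r)‖) := by
  have hq : ‖1/t₀‖ < 1 := by
    rw [Real.norm_eq_abs, abs_of_pos (by positivity)]
    rw [div_lt_one (by linarith)]; linarith
  have hs : Summable (fun r : ℕ => (D * C) * (((r:ℝ)+1) * (1/t₀) ^ r)) := by
    apply Summable.mul_left
    have h1 := summable_pow_mul_geometric_of_norm_lt_one 1 hq
    have h2 := summable_geometric_of_norm_lt_one hq
    apply (h1.add h2).congr
    intro r; push_cast; ring
  apply Summable.of_nonneg_of_le (fun r => norm_nonneg _) (fun r => ?_) hs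
  rw [Real.norm_eq_abs, abs_mul, abs_div, abs_of_pos (gamRec_pos μ hμ r)]
  calc |w r| * (|a r| / gamRec μ r) ≤ (D * ((r:ℝ)+1)) * (C / t₀ ^ r) := by
        apply mul_le_mul (hw r) (hb r)
          (by have := gamRec_pos μ hμ r; positivity) (by positivity)
    _ = (D * C) * (((r:ℝ)+1) * (1/t₀) ^ r) := by
        rw [div_pow, one_pow]; ring

lemma hasDerivAt_Afun (μ : ℝ) (hμ : 0 ≤ μ) (a : ℕ → ℝ) {t₀ C : ℝ} (ht₀ : 1 < t₀) (hC : 0 ≤ C)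
    (hb : ∀ r : ℕ, |a r| / gamRec μ r ≤ C / t₀ ^ r) :
    HasDerivAt (Afun μ a) (∑' r : ℕ, (r : ℝ) * a r / gamRec μ r) 1 := by
  set t₁ := (1 + t₀) / 2 with ht₁def
  have ht₁1 : 1 < t₁ := by rw [ht₁def]; linarith
  have ht₁t₀ : t₁ < t₀ := by rw [ht₁def]; linarith
  clear_value t₁
  have ht₁0 : (0:ℝ) < t₁ := by linarith
  have hq : ‖t₁/t₀‖ < 1 := by
    rw [Real.norm_eq_abs, abs_of_pos (div_pos ht₁0 (by linarith))]
    rw [div_lt_one (by linarith)]; linarith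
  set u : ℕ → ℝ := fun r => C * ((r:ℝ) * (t₁/t₀) ^ r) with hu
  have hus : Summable u := by
    apply Summable.mul_left
    have := summable_pow_mul_geometric_of_norm_lt_one 1 hq
    apply this.congr; intro r; push_cast; ring
  set g : ℕ → ℝ → ℝ := fun r x => a r * x ^ r / gamRec μ r with hg
  set g' : ℕ → ℝ → ℝ := fun r x => a r / gamRec μ r * ((r:ℕ) * x ^ (r - 1)) with hg'
  have hd : ∀ r : ℕ, ∀ y : ℝ, y ∈ Ioo (-t₁) t₁ → HasDerivAt (g r) (g' r y) y := by
    intro r y _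
    have h := (hasDerivAt_pow r y).const_mul (a r / gamRec μ r)
    apply h.congr_of_eventuallyEq
    filter_upwards with z
    simp only [hg]
    ring
  have hbound : ∀ r : ℕ, ∀ y : ℝ, y ∈ Ioo (-t₁) t₁ → ‖g' r y‖ ≤ u r := by
    intro r y hy
    have hyle : |y| ≤ t₁ := by
      rw [abs_le]; exact ⟨hy.1.le, hy.2.le⟩
    simp only [hg', hu, Real.norm_eq_abs]
    rw [abs_mul, abs_div, abs_of_pos (gamRec_pos μ hμ r), abs_mul, Nat.abs_cast, abs_pow]
    rcases Nat.eq_zero_or_pos r with rfl | hr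
    · simp
    · have h1 : |y| ^ (r-1) ≤ t₁ ^ (r-1) := pow_le_pow_left₀ (abs_nonneg _) hyle _
      have h2 : t₁ ^ (r-1) ≤ t₁ ^ r := pow_le_pow_right₀ (by linarith) (Nat.sub_le r 1)
      calc |a r| / gamRec μ r * ((r:ℝ) * |y| ^ (r-1))
          ≤ C / t₀ ^ r * ((r:ℝ) * t₁ ^ r) := by
            apply mul_le_mul (hb r) ?_ (by positivity) (by positivity)
            exact mul_le_mul_of_nonneg_left (h1.trans h2) (Nat.cast_nonneg r)
        _ = C * ((r:ℝ) * (t₁/t₀) ^ r) := by rw [div_pow]; ring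
  have hg0 : Summable (fun r => g r 1) := by
    apply Summable.of_norm
    have hqq : ‖(1/t₀ : ℝ)‖ < 1 := by
      rw [Real.norm_eq_abs, abs_of_pos (by positivity), div_lt_one (by linarith)]; linarith
    apply Summable.of_nonneg_of_le (fun r => norm_nonneg _) (fun r => ?_)
      ((summable_geometric_of_norm_lt_one hqq).mul_left C)
    have hnorm : ‖g r 1‖ = |a r| / gamRec μ r := by
      simp only [hg, one_pow, mul_one, Real.norm_eq_abs, abs_div]
      rw [abs_of_pos (gamRec_pos μ hμ r)]
    rw [hnorm]
    calc |a r| / gamRec μ r ≤ C / t₀ ^ r := hb r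
      _ = C * (1/t₀) ^ r := by rw [div_pow, one_pow]; ring
  have h1t : (1:ℝ) ∈ Ioo (-t₁) t₁ := by constructor <;> [linarith; linarith]
  have := hasDerivAt_tsum_of_isPreconnected hus isOpen_Ioo (convex_Ioo _ _).isPreconnected
    hd hbound h1t hg0 h1t
  have heq : Afun μ a = fun z => ∑' r, g r z := by
    funext z; rfl
  rw [heq]
  convert this using 1
  · rfl
  · rfl
  apply tsum_congr
  intro r
  simp only [hg', one_pow, mul_one]
  ring

lemma Fstep (μ : ℝ) (hμ : 0 ≤ μ) (y : ℝ) (j : ℕ) :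
    (((j+1:ℕ):ℝ) + 2*μ*theta (j+1)) * (y ^ (j+1) / gamRec μ (j+1))
      = y * (y ^ j / gamRec μ j) := by
  have hc : ((j:ℝ) + 1 + 2*μ*theta (j+1)) ≠ 0 := by
    have := theta_nonneg (j+1); have := Nat.cast_nonneg (α := ℝ) j; nlinarith
  simp only [gamRec_succ μ j, Nat.cast_add, Nat.cast_one]
  rw [← mul_div_assoc, mul_div_mul_left _ _ hc, pow_succ]
  ring

lemma summable_norm_F (μ : ℝ) (hμ : 0 ≤ μ) (y : ℝ) :
    Summable (fun j : ℕ => ‖((j:ℝ) + 2*μ*theta j) * (y ^ j / gamRec μ j)‖) := by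
  apply (summable_nat_add_iff 1).mp
  apply ((summable_norm_E μ hμ y).mul_left |y|).congr
  intro j
  rw [Fstep μ hμ y j, norm_mul, Real.norm_eq_abs y]

lemma tsum_shift_E (μ : ℝ) (hμ : 0 ≤ μ) (y : ℝ) :
    ∑' j : ℕ, ((j:ℝ) + 2*μ*theta j) * (y ^ j / gamRec μ j) = y * emu μ y := by
  set f : ℕ → ℝ := fun j => ((j:ℝ) + 2*μ*theta j) * (y ^ j / gamRec μ j) with hf
  have hstep : ∀ j : ℕ, f (j+1) = y * (y ^ j / gamRec μ j) := fun j => Fstep μ hμ y j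
  have hsum1 : Summable (fun j => f (j+1)) := by
    apply ((summable_E μ hμ y).mul_left y).congr
    intro j; rw [hstep j]
  have hsum : Summable f := (summable_nat_add_iff 1).mp hsum1
  rw [Summable.tsum_eq_zero_add hsum]
  have hf0 : f 0 = 0 := by simp [hf, theta]
  rw [hf0, zero_add, tsum_congr hstep, tsum_mul_left]
  rfl

lemma tsum_theta_E (μ : ℝ) (hμ : 0 ≤ μ) (y : ℝ) :
    ∑' j : ℕ, theta j * (y ^ j / gamRec μ j) = (emu μ y - emu μ (-y)) / 2 := by
  have hterm : ∀ j : ℕ, theta j * (y ^ j / gamRec μ j)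
      = (y ^ j / gamRec μ j - (-y) ^ j / gamRec μ j) / 2 := by
    intro j
    rw [theta_eq, neg_pow]
    ring
  rw [tsum_congr hterm]
  rw [tsum_div_const, Summable.tsum_sub (summable_E μ hμ y) (summable_E μ hμ (-y))]
  rfl

end Aux

section AuxInt
open Set Real

lemma integrable_piece {n s : ℝ} (hn : 0 < n) (hs : -1 < s) :
    IntegrableOn (fun t : ℝ => t ^ s * Real.exp (-(n * t))) (Ioi 0) := by
  have h := integrableOn_rpow_mul_exp_neg_mul_rpow hs zero_lt_one hn
  simpa [Real.rpow_one, mul_comm] using h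

lemma integral_piece {n s : ℝ} (hn : 0 < n) (hs : 0 ≤ s) (x : ℝ) :
    ∫ t in Ioi (0:ℝ), Real.exp (-n * t) * t ^ s * (t - x) =
      Real.Gamma (s+2) / n ^ (s+2) - x * (Real.Gamma (s+1) / n ^ (s+1)) := by
  have J1 : IntegrableOn (fun t : ℝ => t ^ (s+1) * Real.exp (-(n * t))) (Ioi 0) :=
    integrable_piece hn (by linarith)
  have J2 : IntegrableOn (fun t : ℝ => t ^ s * Real.exp (-(n * t))) (Ioi 0) :=
    integrable_piece hn (by linarith)
  have I1 : ∫ t in Ioi (0:ℝ), t ^ (s+1) * Real.exp (-(n * t)) = (1/n) ^ (s+2) * Real.Gamma (s+2) := by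
    have := Real.integral_rpow_mul_exp_neg_mul_Ioi (a := s+2) (r := n) (by linarith) hn
    rw [show s+2-1 = s+1 by ring] at this
    exact this
  have I2 : ∫ t in Ioi (0:ℝ), t ^ s * Real.exp (-(n * t)) = (1/n) ^ (s+1) * Real.Gamma (s+1) := by
    have := Real.integral_rpow_mul_exp_neg_mul_Ioi (a := s+1) (r := n) (by linarith) hn
    rw [show s+1-1 = s by ring] at this
    exact this
  have hcong : ∀ t ∈ Ioi (0:ℝ), Real.exp (-n * t) * t ^ s * (t - x) =
      t ^ (s+1) * Real.exp (-(n * t)) - x * (t ^ s * Real.exp (-(n * t))) := by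
    intro t ht
    rw [Real.rpow_add_one (ne_of_gt ht)]
    ring
  rw [setIntegral_congr_fun measurableSet_Ioi hcong, integral_sub J1 (J2.const_mul x),
    integral_const_mul, I1, I2, Real.div_rpow zero_le_one hn.le, Real.div_rpow zero_le_one hn.le,
    Real.one_rpow, Real.one_rpow]
  ring

lemma term_eval {n s : ℝ} (hn : 0 < n) (hs : 0 ≤ s) (x : ℝ) :
    n ^ (s+1) / Real.Gamma (s+1) *
      (Real.Gamma (s+2) / n ^ (s+2) - x * (Real.Gamma (s+1) / n ^ (s+1))) = (s+1)/n - x := by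
  have hG : Real.Gamma (s+2) = (s+1) * Real.Gamma (s+1) := by
    have := Real.Gamma_add_one (s := s+1) (by linarith)
    rw [show s+1+1 = s+2 by ring] at this
    exact this
  have hGp : 0 < Real.Gamma (s+1) := Real.Gamma_pos_of_pos (by linarith)
  have hr : n ^ (s+2) = n ^ (s+1) * n := by
    rw [show s+2 = (s+1)+1 by ring, Real.rpow_add_one (ne_of_gt hn)]
  have hnp : 0 < n ^ (s+1) := Real.rpow_pos_of_pos hn _
  rw [hG, hr]
  field_simp

end AuxInt

theorem Dop_first_central_moment (μ lam : ℝ) (hμ : 0 ≤ μ) (hlam : 0 ≤ lam)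
    (a : ℕ → ℝ) (ha0 : a 0 ≠ 0) (hA : AnalyticHyp μ a) (hA1 : Afun μ a 1 ≠ 0)
    (hpos : ∀ r : ℕ, 0 ≤ a r / Afun μ a 1) :
    (∀ n : ℕ, 1 ≤ n → ∀ x : ℝ, 0 ≤ x →
      Dop μ lam a n (fun t => t - x) x =
        (μ / n) * (emu μ (-(n * x)) / emu μ (n * x)) *
            ((Afun μ a 1 - Afun μ a (-1)) / Afun μ a 1) +
          (1 / n) * (deriv (Afun μ a) 1 / Afun μ a 1 + lam + 1)) ∧
    (∀ K : Set ℝ, K ⊆ Set.Ici 0 → IsCompact K →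
      TendstoUniformlyOn (fun (n : ℕ) (x : ℝ) => Dop μ lam a n (fun t => t - x) x) 0
        atTop K) := by
  have part1 : ∀ n : ℕ, 1 ≤ n → ∀ x : ℝ, 0 ≤ x →
      Dop μ lam a n (fun t => t - x) x =
        (μ / n) * (emu μ (-(n * x)) / emu μ (n * x)) *
            ((Afun μ a 1 - Afun μ a (-1)) / Afun μ a 1) +
          (1 / n) * (deriv (Afun μ a) 1 / Afun μ a 1 + lam + 1) := by
    obtain ⟨t₀, ht₀, C, hC, hb⟩ := coeff_bound μ hμ a hA
    have hderiv : deriv (Afun μ a) 1 = ∑' r : ℕ, (r : ℝ) * a r / gamRec μ r :=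
      (hasDerivAt_Afun μ hμ a ht₀ hC hb).deriv
    -- coefficient series facts
    have nAc : Summable (fun r : ℕ => ‖a r / gamRec μ r‖) := by
      have := summable_norm_wA μ hμ a ht₀ hC hb (fun _ => 1) zero_le_one (fun r => by
        rw [abs_one]; have := Nat.cast_nonneg (α := ℝ) r; linarith)
      apply this.congr; intro r; rw [one_mul]
    have nB : Summable (fun r : ℕ => ‖((r:ℝ) + 2*μ*theta r) * (a r / gamRec μ r)‖) := by
      apply summable_norm_wA μ hμ a ht₀ hC hb _ (D := 1 + 2*μ) (by linarith)
      intro r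
      have h1 := theta_nonneg r; have h2 := theta_le_one r
      have h3 := Nat.cast_nonneg (α := ℝ) r
      rw [abs_of_nonneg (by nlinarith)]; nlinarith
    have nθA : Summable (fun r : ℕ => ‖theta r * (a r / gamRec μ r)‖) := by
      apply summable_norm_wA μ hμ a ht₀ hC hb _ (D := 1) zero_le_one
      intro r
      have h1 := theta_nonneg r; have h2 := theta_le_one r
      have h3 := Nat.cast_nonneg (α := ℝ) r
      rw [abs_of_nonneg h1]; nlinarith
    have nrA : Summable (fun r : ℕ => ‖(r:ℝ) * (a r / gamRec μ r)‖) := by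
      apply summable_norm_wA μ hμ a ht₀ hC hb _ (D := 1) zero_le_one
      intro r
      rw [Nat.abs_cast]; have := Nat.cast_nonneg (α := ℝ) r; linarith
    -- tsum values for coefficient series
    have hT_Ac : ∑' r : ℕ, a r / gamRec μ r = Afun μ a 1 := by
      unfold Afun
      exact tsum_congr fun r => by rw [one_pow, mul_one]
    have nmA : Summable (fun r : ℕ => (-1:ℝ) ^ r * (a r / gamRec μ r)) := by
      apply Summable.of_norm
      apply nAc.congr
      intro r
      rw [norm_mul, norm_pow, norm_neg, norm_one, one_pow, one_mul]
    have hT_Am : ∑' r : ℕ, (-1:ℝ) ^ r * (a r / gamRec μ r) = Afun μ a (-1) := by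
      unfold Afun
      exact tsum_congr fun r => by ring
    have hT_θA : ∑' r : ℕ, theta r * (a r / gamRec μ r)
        = (Afun μ a 1 - Afun μ a (-1)) / 2 := by
      have hterm : ∀ r : ℕ, theta r * (a r / gamRec μ r)
          = (a r / gamRec μ r - (-1:ℝ) ^ r * (a r / gamRec μ r)) / 2 := by
        intro r; rw [theta_eq]; ring
      rw [tsum_congr hterm, tsum_div_const, Summable.tsum_sub nAc.of_norm nmA, hT_Ac, hT_Am]
    have hT_rA : ∑' r : ℕ, (r:ℝ) * (a r / gamRec μ r) = ∑' r : ℕ, (r : ℝ) * a r / gamRec μ r :=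
      tsum_congr fun r => by rw [mul_div_assoc]
    have hT_B : ∑' r : ℕ, ((r:ℝ) + 2*μ*theta r) * (a r / gamRec μ r)
        = (∑' r : ℕ, (r : ℝ) * a r / gamRec μ r)
          + μ * (Afun μ a 1 - Afun μ a (-1)) := by
      have hterm : ∀ r : ℕ, ((r:ℝ) + 2*μ*theta r) * (a r / gamRec μ r)
          = (r:ℝ) * (a r / gamRec μ r) + 2*μ*(theta r * (a r / gamRec μ r)) := by
        intro r; ring
      rw [tsum_congr hterm, Summable.tsum_add nrA.of_norm ((nθA.of_norm).mul_left (2*μ)),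
        tsum_mul_left, hT_θA, hT_rA]
      ring
    -- main computation
    intro n hn x hx
    have hn0 : (0:ℝ) < (n:ℝ) := by exact_mod_cast hn
    have hy : (0:ℝ) ≤ (n:ℝ) * x := by positivity
    have nE := summable_norm_E μ hμ ((n:ℝ)*x)
    have nF := summable_norm_F μ hμ ((n:ℝ)*x)
    have nθE : Summable (fun j : ℕ => ‖theta j * (((n:ℝ)*x) ^ j / gamRec μ j)‖) := by
      apply Summable.of_nonneg_of_le (fun j => norm_nonneg _) (fun j => ?_) nE
      rw [norm_mul]
      calc ‖theta j‖ * ‖((n:ℝ)*x) ^ j / gamRec μ j‖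
          ≤ 1 * ‖((n:ℝ)*x) ^ j / gamRec μ j‖ := by
            apply mul_le_mul_of_nonneg_right ?_ (norm_nonneg _)
            rw [Real.norm_eq_abs, abs_of_nonneg (theta_nonneg j)]
            exact theta_le_one j
        _ = ‖((n:ℝ)*x) ^ j / gamRec μ j‖ := one_mul _
    -- q identity
    have hq_eq : ∀ k : ℕ, pk μ a k ((n:ℝ)*x) / gamRec μ k
        = ∑ j ∈ Finset.range (k+1),
            ((n:ℝ)*x) ^ j / gamRec μ j * (a (k-j) / gamRec μ (k-j)) := by
      intro k
      rw [pk, Finset.sum_div]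
      apply Finset.sum_congr rfl
      intro j hj
      have hk := (gamRec_pos μ hμ k).ne'
      have hj' := (gamRec_pos μ hμ j).ne'
      have hkj := (gamRec_pos μ hμ (k-j)).ne'
      field_simp
    -- convolution summabilities
    have nConv0 := summable_norm_sum_mul_range_of_summable_norm nE nAc
    have nConv1 := summable_norm_sum_mul_range_of_summable_norm nF nAc
    have nConv2 := summable_norm_sum_mul_range_of_summable_norm nE nB
    have nConv3 := summable_norm_sum_mul_range_of_summable_norm nθE nθA
    -- convolution values
    have hConv0 : ∑' k : ℕ, ∑ j ∈ Finset.range (k+1),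
          ((n:ℝ)*x) ^ j / gamRec μ j * (a (k-j) / gamRec μ (k-j))
        = emu μ ((n:ℝ)*x) * Afun μ a 1 := by
      rw [← tsum_mul_tsum_eq_tsum_sum_range_of_summable_norm nE nAc, hT_Ac]
      rfl
    have hConv1 : ∑' k : ℕ, ∑ j ∈ Finset.range (k+1),
          (((j:ℝ) + 2*μ*theta j) * (((n:ℝ)*x) ^ j / gamRec μ j)) * (a (k-j) / gamRec μ (k-j))
        = ((n:ℝ)*x) * emu μ ((n:ℝ)*x) * Afun μ a 1 := by
      rw [← tsum_mul_tsum_eq_tsum_sum_range_of_summable_norm nF nAc, tsum_shift_E μ hμ, hT_Ac]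
    have hConv2 : ∑' k : ℕ, ∑ j ∈ Finset.range (k+1),
          (((n:ℝ)*x) ^ j / gamRec μ j) * ((((k-j:ℕ):ℝ) + 2*μ*theta (k-j)) * (a (k-j) / gamRec μ (k-j)))
        = emu μ ((n:ℝ)*x) * ((∑' r : ℕ, (r : ℝ) * a r / gamRec μ r)
            + μ * (Afun μ a 1 - Afun μ a (-1))) := by
      rw [← tsum_mul_tsum_eq_tsum_sum_range_of_summable_norm nE nB, hT_B]
      rfl
    have hConv3 : ∑' k : ℕ, ∑ j ∈ Finset.range (k+1),
          (theta j * (((n:ℝ)*x) ^ j / gamRec μ j)) * (theta (k-j) * (a (k-j) / gamRec μ (k-j)))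
        = ((emu μ ((n:ℝ)*x) - emu μ (-((n:ℝ)*x)))/2) * ((Afun μ a 1 - Afun μ a (-1))/2) := by
      rw [← tsum_mul_tsum_eq_tsum_sum_range_of_summable_norm nθE nθA, tsum_theta_E μ hμ, hT_θA]
    -- coefficient split
    have hsplit : ∀ k : ℕ, ((k:ℝ) + 2*μ*theta k) * (∑ j ∈ Finset.range (k+1),
          ((n:ℝ)*x) ^ j / gamRec μ j * (a (k-j) / gamRec μ (k-j)))
        = (∑ j ∈ Finset.range (k+1),
            (((j:ℝ) + 2*μ*theta j) * (((n:ℝ)*x) ^ j / gamRec μ j)) * (a (k-j) / gamRec μ (k-j)))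
          + (∑ j ∈ Finset.range (k+1),
            (((n:ℝ)*x) ^ j / gamRec μ j) * ((((k-j:ℕ):ℝ) + 2*μ*theta (k-j)) * (a (k-j) / gamRec μ (k-j))))
          + (-4*μ) * (∑ j ∈ Finset.range (k+1),
            (theta j * (((n:ℝ)*x) ^ j / gamRec μ j)) * (theta (k-j) * (a (k-j) / gamRec μ (k-j)))) := by
      intro k
      rw [Finset.mul_sum, Finset.mul_sum, ← Finset.sum_add_distrib, ← Finset.sum_add_distrib]
      apply Finset.sum_congr rfl
      intro j hj
      have hjk : j ≤ k := Nat.lt_succ_iff.mp (Finset.mem_range.mp hj)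
      obtain ⟨r, rfl⟩ : ∃ r, k = j + r := ⟨k - j, (Nat.add_sub_cancel' hjk).symm⟩
      rw [Nat.add_sub_cancel_left]
      rw [theta_add j r]
      push_cast
      ring
    -- summabilities for the split
    have ST1 : Summable (fun k : ℕ => ((k:ℝ) + 2*μ*theta k) * (∑ j ∈ Finset.range (k+1),
          ((n:ℝ)*x) ^ j / gamRec μ j * (a (k-j) / gamRec μ (k-j)))) := by
      apply Summable.congr (((nConv1.of_norm.add nConv2.of_norm)).add
        ((nConv3.of_norm).mul_left (-4*μ)))
      intro k
      exact (hsplit k).symm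
    have hT1 : ∑' k : ℕ, ((k:ℝ) + 2*μ*theta k) * (∑ j ∈ Finset.range (k+1),
          ((n:ℝ)*x) ^ j / gamRec μ j * (a (k-j) / gamRec μ (k-j)))
        = ((n:ℝ)*x) * emu μ ((n:ℝ)*x) * Afun μ a 1
          + emu μ ((n:ℝ)*x) * ((∑' r : ℕ, (r : ℝ) * a r / gamRec μ r)
              + μ * (Afun μ a 1 - Afun μ a (-1)))
          + (-4*μ) * (((emu μ ((n:ℝ)*x) - emu μ (-((n:ℝ)*x)))/2)
              * ((Afun μ a 1 - Afun μ a (-1))/2)) := by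
      rw [tsum_congr hsplit,
        Summable.tsum_add (nConv1.of_norm.add nConv2.of_norm) ((nConv3.of_norm).mul_left (-4*μ)),
        Summable.tsum_add nConv1.of_norm nConv2.of_norm, tsum_mul_left, hConv1, hConv2, hConv3]
    -- termwise evaluation of the operator
    have hterm : ∀ k : ℕ,
        pk μ a k ((n:ℝ) * x) / gamRec μ k *
          ((n:ℝ) ^ ((k:ℝ) + 2*μ*theta k + lam + 1) / Real.Gamma ((k:ℝ) + 2*μ*theta k + lam + 1)) *
          ∫ t in Set.Ioi (0:ℝ), Real.exp (-(n:ℝ) * t) * t ^ ((k:ℝ) + 2*μ*theta k + lam) * (t - x)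
        = (1/(n:ℝ)) * (((k:ℝ) + 2*μ*theta k) * (∑ j ∈ Finset.range (k+1),
              ((n:ℝ)*x) ^ j / gamRec μ j * (a (k-j) / gamRec μ (k-j))))
          + ((lam+1)/(n:ℝ) - x) * (∑ j ∈ Finset.range (k+1),
              ((n:ℝ)*x) ^ j / gamRec μ j * (a (k-j) / gamRec μ (k-j))) := by
      intro k
      have hθ := theta_nonneg k
      have hkc := Nat.cast_nonneg (α := ℝ) k
      have hs : 0 ≤ (k:ℝ) + 2*μ*theta k + lam := by nlinarith
      rw [integral_piece hn0 hs x, mul_assoc, term_eval hn0 hs x, hq_eq k]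
      ring
    have hS2 : Summable (fun k : ℕ => ((lam+1)/(n:ℝ) - x) * (∑ j ∈ Finset.range (k+1),
        ((n:ℝ)*x) ^ j / gamRec μ j * (a (k-j) / gamRec μ (k-j)))) :=
      (nConv0.of_norm).mul_left _
    have hS1 : Summable (fun k : ℕ => (1/(n:ℝ)) * (((k:ℝ) + 2*μ*theta k) *
        (∑ j ∈ Finset.range (k+1),
          ((n:ℝ)*x) ^ j / gamRec μ j * (a (k-j) / gamRec μ (k-j))))) :=
      ST1.mul_left _
    have he := (emu_pos μ hμ hy).ne'
    simp only [Dop]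
    rw [tsum_congr hterm, Summable.tsum_add hS1 hS2, tsum_mul_left, tsum_mul_left, hT1, hConv0, hderiv]
    field_simp
    ring
  refine ⟨part1, ?_⟩
  intro K hK _
  rw [Metric.tendstoUniformlyOn_iff]
  intro ε hε
  set c1 := (Afun μ a 1 - Afun μ a (-1)) / Afun μ a 1 with hc1
  set c2 := deriv (Afun μ a) 1 / Afun μ a 1 + lam + 1 with hc2
  set B := μ * |c1| + |c2| with hBdef
  have hBtend : Tendsto (fun n : ℕ => B * (1/(n:ℝ))) atTop (nhds 0) := by
    simpa using tendsto_one_div_atTop_nhds_zero_nat.const_mul B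
  filter_upwards [hBtend.eventually (gt_mem_nhds hε), eventually_ge_atTop 1] with n hlt hn1
  intro x hxK
  have hx : (0:ℝ) ≤ x := hK hxK
  have hn0 : (0:ℝ) < (n:ℝ) := by exact_mod_cast hn1
  have hy : (0:ℝ) ≤ (n:ℝ) * x := by positivity
  have hep := emu_pos μ hμ hy
  rw [part1 n hn1 x hx]
  rw [Pi.zero_apply, dist_zero_left, Real.norm_eq_abs]
  have hratio : |emu μ (-((n:ℝ)*x)) / emu μ ((n:ℝ)*x)| ≤ 1 := by
    rw [abs_div, abs_of_pos hep, div_le_one hep]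
    exact abs_emu_neg_le μ hμ hy
  have h1 : |(μ/(n:ℝ)) * (emu μ (-((n:ℝ)*x)) / emu μ ((n:ℝ)*x)) * c1|
      ≤ (μ/(n:ℝ)) * |c1| := by
    rw [abs_mul, abs_mul, abs_of_nonneg (by positivity : (0:ℝ) ≤ μ/(n:ℝ))]
    have hc1n := abs_nonneg c1
    have hmn : (0:ℝ) ≤ μ/(n:ℝ) := by positivity
    have := mul_le_mul_of_nonneg_right (mul_le_mul_of_nonneg_left hratio hmn) hc1n
    simpa using this
  have h2 : |(1/(n:ℝ)) * c2| = (1/(n:ℝ)) * |c2| := by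
    rw [abs_mul, abs_of_nonneg (by positivity : (0:ℝ) ≤ 1/(n:ℝ))]
  calc |(μ/(n:ℝ)) * (emu μ (-((n:ℝ)*x)) / emu μ ((n:ℝ)*x)) * c1 + (1/(n:ℝ)) * c2|
      ≤ |(μ/(n:ℝ)) * (emu μ (-((n:ℝ)*x)) / emu μ ((n:ℝ)*x)) * c1| + |(1/(n:ℝ)) * c2| :=
        abs_add_le _ _
    _ ≤ (μ/(n:ℝ)) * |c1| + (1/(n:ℝ)) * |c2| := by rw [h2]; linarith
    _ = B * (1/(n:ℝ)) := by rw [hBdef]; ring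
    _ < ε := hlt
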